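/- Let n ≥ 1, q ≥ 2 and 1 ≤ d ≤ n be integers, and let g(z) = Σ_{i=0}^{n} g_i K_i^{(n,q)}(z) be a real polynomial satisfying g_0 > 0, g_i ≥ 0 for i = 1,2,…,n, g(0) > 0, and g(i) ≤ 0 for every integer i with d ≤ i ≤ n. Then every code C ⊆ H(n,q) with minimum Hamming distance at least d satisfies |C| ≤ g(0)/g_0. -/

import Mathlib

/-- Generalized binomial coefficient `C(x,j) = x(x-1)⋯(x-j+1)/j!` as a function of a real `x`. -/
noncomputable def genChoose (x : ℝ) (j : ℕ) : ℝ :=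
  (descPochhammer ℝ j).eval x / (Nat.factorial j : ℝ)

/-- The `q`-ary Krawtchouk polynomial `K_i^{(n,q)}(x)`. -/
noncomputable def kraw (n q i : ℕ) (x : ℝ) : ℝ :=
  ∑ j ∈ Finset.range (i + 1),
    (-1 : ℝ) ^ j * ((q : ℝ) - 1) ^ (i - j) * genChoose x j * genChoose ((n : ℝ) - x) (i - j)

open Finset Polynomial

lemma genChoose_nat (m j : ℕ) : genChoose (m : ℝ) j = (m.choose j : ℝ) := by
  rw [genChoose, descPochhammer_eval_eq_descFactorial,
    Nat.descFactorial_eq_factorial_mul_choose m j]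
  push_cast
  rw [mul_comm, mul_div_assoc, div_self (by positivity), mul_one]

lemma kraw_nat (n q i w : ℕ) (hw : w ≤ n) :
    kraw n q i (w : ℝ) = ∑ j ∈ Finset.range (i + 1),
      (-1 : ℝ) ^ j * ((q : ℝ) - 1) ^ (i - j) * (w.choose j : ℝ) * ((n - w).choose (i - j) : ℝ) := by
  unfold kraw
  refine Finset.sum_congr rfl fun j _ => ?_
  rw [genChoose_nat, show (n : ℝ) - (w : ℝ) = ((n - w : ℕ) : ℝ) by
    rw [Nat.cast_sub hw], genChoose_nat]

lemma kraw_zero (n q : ℕ) (x : ℝ) : kraw n q 0 x = 1 := by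
  simp [kraw, genChoose]

lemma coeff_one_add_C_mul_X_pow (c : ℂ) (m k : ℕ) :
    ((1 + C c * X) ^ m).coeff k = (m.choose k : ℂ) * c ^ k := by
  rw [add_comm, add_pow, finset_sum_coeff]
  have h1 : ∀ j ∈ range (m+1), ((C c * X) ^ j * 1 ^ (m - j) * (m.choose j : ℂ[X])).coeff k
      = if j = k then (m.choose j : ℂ) * c ^ j else 0 := by
    intro j hj
    rw [one_pow, mul_one, mul_pow, ← C_pow, mul_comm, ← Polynomial.C_eq_natCast, ← mul_assoc,
      ← C_mul, coeff_C_mul, coeff_X_pow]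
    by_cases h : j = k <;> simp [h, Ne.symm, eq_comm]
  rw [Finset.sum_congr rfl h1, Finset.sum_ite_eq' (range (m+1)) k
    (fun j => (m.choose j : ℂ) * c ^ j)]
  split
  · rfl
  · rename_i h
    rw [Nat.choose_eq_zero_of_lt (by simpa using h)]
    simp

section Char

variable {q : ℕ} [NeZero q] (e : AddChar (ZMod q) ℂ)

omit [NeZero q] in
lemma char_map_sum {ι : Type*} (s : Finset ι) (f : ι → ZMod q) :
    e (∑ j ∈ s, f j) = ∏ j ∈ s, e (f j) := by
  classical
  induction s using Finset.induction_on with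
  | empty => simp
  | insert a s h ih => rw [Finset.sum_insert h, Finset.prod_insert h,
      AddChar.map_add_eq_mul, ih]

lemma char_conj (a : ZMod q) : (starRingEnd ℂ) (e a) = e (-a) := by
  rw [AddChar.starComp_apply (by rw [ZMod.ringChar_zmod_n]; exact NeZero.pos q) a,
    AddChar.inv_apply]

lemma char_sum_mul (he : e.IsPrimitive) (b : ZMod q) :
    ∑ a : ZMod q, e (a * b) = if b = 0 then (q : ℂ) else 0 := by
  split
  · rename_i h
    simp [h, ZMod.card]
  · rename_i h
    have := AddChar.sum_eq_zero_of_ne_one (he h)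
    calc ∑ a : ZMod q, e (a * b) = ∑ a : ZMod q, (e.mulShift b) a := by
          simp [AddChar.mulShift_apply, mul_comm]
      _ = 0 := this

lemma coordFactor (he : e.IsPrimitive) (b : ZMod q) :
    ∑ a : ZMod q, C (e (a * b)) * X ^ (if a ≠ 0 then 1 else 0)
      = if b = 0 then 1 + C ((q : ℂ) - 1) * X else 1 - X := by
  rw [← Finset.add_sum_erase _ _ (mem_univ (0 : ZMod q))]
  have h1 : ∀ a ∈ Finset.univ.erase (0 : ZMod q),
      C (e (a * b)) * X ^ (if a ≠ 0 then 1 else 0) = C (e (a * b)) * X := by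
    intro a ha
    rw [if_pos (Finset.mem_erase.1 ha).1, pow_one]
  rw [Finset.sum_congr rfl h1, ← Finset.sum_mul, ← map_sum C,
    Finset.sum_erase_eq_sub (mem_univ (0 : ZMod q)), char_sum_mul e he]
  simp only [zero_mul, AddChar.map_zero_eq_one, ne_eq, not_true_eq_false, if_false, pow_zero,
    mul_one]
  split
  · rfl
  · rw [map_sub, map_zero, zero_sub, map_one]
    ring

lemma key_poly (n : ℕ) (w : Fin n → ZMod q) (he : e.IsPrimitive) :
    ∑ z : Fin n → ZMod q, C (e (∑ j, z j * w j)) * X ^ hammingNorm z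
      = (1 + C ((q : ℂ) - 1) * X) ^ (n - hammingNorm w) * (1 - X) ^ hammingNorm w := by
  have h1 : ∀ z : Fin n → ZMod q, C (e (∑ j, z j * w j)) * X ^ hammingNorm z
      = ∏ j, (C (e (z j * w j)) * X ^ (if z j ≠ 0 then 1 else 0)) := by
    intro z
    rw [char_map_sum, map_prod, hammingNorm, Finset.card_filter,
      ← Finset.prod_pow_eq_pow_sum, Finset.prod_mul_distrib]
  rw [Finset.sum_congr rfl fun z _ => h1 z,
    ← Fintype.prod_sum (fun (j : Fin n) (a : ZMod q) =>
      C (e (a * w j)) * X ^ (if a ≠ 0 then 1 else 0)),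
    Finset.prod_congr rfl fun j _ => coordFactor e he (w j), Finset.prod_ite,
    Finset.prod_const, Finset.prod_const]
  congr 2
  have := Finset.card_filter_add_card_filter_not (s := (Finset.univ : Finset (Fin n)))
    (p := fun j => w j = 0)
  simp only [Finset.card_univ, Fintype.card_fin] at this
  have h2 : hammingNorm w = #(Finset.univ.filter fun j => ¬ w j = 0) := rfl
  omega

lemma coeff_key (n i w : ℕ) (hw : w ≤ n) :
    ((1 + C ((q : ℂ) - 1) * X) ^ (n - w) * (1 - X) ^ w).coeff i
      = ((kraw n q i (w : ℝ) : ℝ) : ℂ) := by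
  have hsub : (1 - X : ℂ[X]) = 1 + C (-1) * X := by
    rw [map_neg, map_one]; ring
  rw [hsub, coeff_mul, Finset.Nat.sum_antidiagonal_eq_sum_range_succ_mk]
  simp only [coeff_one_add_C_mul_X_pow]
  rw [kraw_nat n q i w hw]
  push_cast
  rw [← Finset.sum_range_reflect]
  refine Finset.sum_congr rfl fun j hj => ?_
  have hj' : j ≤ i := by simpa using Nat.lt_succ_iff.mp (Finset.mem_range.mp hj)
  have h1 : i + 1 - 1 - j = i - j := by omega
  have h2 : i - (i - j) = j := by omega
  rw [h1, h2]
  ring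

lemma kraw_eq_charsum (he : e.IsPrimitive) (n i : ℕ) (w : Fin n → ZMod q) :
    ((kraw n q i (hammingNorm w : ℝ) : ℝ) : ℂ)
      = ∑ z : Fin n → ZMod q, if hammingNorm z = i then e (∑ j, z j * w j) else 0 := by
  have hw : hammingNorm w ≤ n := by
    simpa using hammingNorm_le_card_fintype (x := w)
  rw [← coeff_key n i (hammingNorm w) hw, ← key_poly e n w he, finset_sum_coeff]
  refine Finset.sum_congr rfl fun z _ => ?_
  rw [coeff_C_mul, coeff_X_pow]
  by_cases h : hammingNorm z = i <;> simp [h, Ne.symm, eq_comm]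

lemma kraw_sum_nonneg (he : e.IsPrimitive) (n i : ℕ) (C' : Finset (Fin n → ZMod q)) :
    0 ≤ ∑ x ∈ C', ∑ y ∈ C', kraw n q i (hammingDist x y : ℝ) := by
  classical
  set T : (Fin n → ZMod q) → ℂ := fun z => ∑ x ∈ C', e (∑ j, z j * x j) with hT
  have key : ((∑ x ∈ C', ∑ y ∈ C', kraw n q i (hammingDist x y : ℝ) : ℝ) : ℂ)
      = ∑ z : Fin n → ZMod q,
          if hammingNorm z = i then (Complex.normSq (T z) : ℂ) else 0 := by
    push_cast
    calc ∑ x ∈ C', ∑ y ∈ C', ((kraw n q i (hammingDist x y : ℝ) : ℝ) : ℂ)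
        = ∑ x ∈ C', ∑ y ∈ C', ∑ z : Fin n → ZMod q,
            if hammingNorm z = i then e (∑ j, z j * (x j - y j)) else 0 := by
          refine Finset.sum_congr rfl fun x _ => Finset.sum_congr rfl fun y _ => ?_
          rw [hammingDist_comm, hammingDist_eq_hammingNorm, neg_add_eq_sub, kraw_eq_charsum e he n i (x - y)]
          rfl
      _ = ∑ x ∈ C', ∑ z : Fin n → ZMod q, ∑ y ∈ C',
            (if hammingNorm z = i then e (∑ j, z j * (x j - y j)) else 0) :=
          Finset.sum_congr rfl fun x _ => Finset.sum_comm
      _ = ∑ z : Fin n → ZMod q, ∑ x ∈ C', ∑ y ∈ C',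
            (if hammingNorm z = i then e (∑ j, z j * (x j - y j)) else 0) :=
          Finset.sum_comm
      _ = ∑ z : Fin n → ZMod q,
          if hammingNorm z = i then (Complex.normSq (T z) : ℂ) else 0 := by
          refine Finset.sum_congr rfl fun z _ => ?_
          by_cases h : hammingNorm z = i
          · simp only [h, if_true]
            have hsplit : ∀ x y : Fin n → ZMod q,
                e (∑ j, z j * (x j - y j))
                  = e (∑ j, z j * x j) * (starRingEnd ℂ) (e (∑ j, z j * y j)) := by
              intro x y
              rw [char_conj e, ← AddChar.map_add_eq_mul]
              congr 1
              rw [← Finset.sum_neg_distrib, ← Finset.sum_add_distrib]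
              refine Finset.sum_congr rfl fun j _ => ?_
              ring
            calc ∑ x ∈ C', ∑ y ∈ C', e (∑ j, z j * (x j - y j))
                = ∑ x ∈ C', ∑ y ∈ C',
                    e (∑ j, z j * x j) * (starRingEnd ℂ) (e (∑ j, z j * y j)) := by
                  exact Finset.sum_congr rfl fun x _ => Finset.sum_congr rfl fun y _ =>
                    hsplit x y
              _ = T z * (starRingEnd ℂ) (T z) := by
                  rw [hT]
                  simp only [← Finset.sum_mul, ← Finset.mul_sum, map_sum]
              _ = (Complex.normSq (T z) : ℂ) := Complex.mul_conj _
          · simp [h]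
  have key2 : (∑ x ∈ C', ∑ y ∈ C', kraw n q i (hammingDist x y : ℝ))
      = ∑ z : Fin n → ZMod q,
          if hammingNorm z = i then Complex.normSq (T z) else 0 := by
    apply Complex.ofReal_injective
    rw [key]
    push_cast [apply_ite (Complex.ofReal)]
    rfl
  rw [key2]
  refine Finset.sum_nonneg fun z _ => ?_
  split
  · exact Complex.normSq_nonneg _
  · exact le_rfl

end Char

/-- The classical form of the linear programming bound (Theorem 6 of the paper): if
`g(z) = Σ_{i=0}^n g_i K_i^{(n,q)}(z)` satisfies `g₀ > 0`, `g_i ≥ 0` for `1 ≤ i ≤ n`,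
`g(0) > 0` and `g(i) ≤ 0` for integers `d ≤ i ≤ n`, then every code in `H(n,q)` with
minimum distance at least `d` has at most `g(0)/g₀` elements. -/
theorem stmt9 (n q d : ℕ) (hn : 1 ≤ n) (hq : 2 ≤ q) (hd1 : 1 ≤ d) (hdn : d ≤ n)
    (G : ℕ → ℝ)
    (hG0 : 0 < G 0) (hGi : ∀ i : ℕ, 1 ≤ i → i ≤ n → 0 ≤ G i)
    (hg0 : 0 < ∑ i ∈ Finset.range (n + 1), G i * kraw n q i 0)
    (hgi : ∀ i : ℕ, d ≤ i → i ≤ n →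
      (∑ l ∈ Finset.range (n + 1), G l * kraw n q l (i : ℝ)) ≤ 0)
    (C : Finset (Fin n → Fin q))
    (hC : ∀ x ∈ C, ∀ y ∈ C, x ≠ y → d ≤ hammingDist x y) :
    (C.card : ℝ) ≤ (∑ i ∈ Finset.range (n + 1), G i * kraw n q i 0) / G 0 := by
  classical
  haveI : NeZero q := ⟨by omega⟩
  set g0 : ℝ := ∑ i ∈ Finset.range (n + 1), G i * kraw n q i 0 with hg0def
  set N : ℕ := C.card with hN
  -- primitive character
  obtain ⟨ζ, hζ⟩ : ∃ ζ : ℂ, IsPrimitiveRoot ζ q :=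
    ⟨Complex.exp (2 * Real.pi * Complex.I / q), Complex.isPrimitiveRoot_exp q (by omega)⟩
  set e : AddChar (ZMod q) ℂ := AddChar.zmodChar q ((IsPrimitiveRoot.iff_def ζ q).mp hζ).left
    with he
  have hprim : e.IsPrimitive := AddChar.zmodChar_primitive_of_primitive_root q hζ
  -- transfer the code to `ZMod q`
  set eqv : Fin q ≃ ZMod q := Fintype.equivOfCardEq (by simp [ZMod.card]) with heqv
  set ι : (Fin n → Fin q) → (Fin n → ZMod q) := fun x j => eqv (x j) with hι
  have hinj : Function.Injective ι := by
    intro a b hab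
    funext j
    exact eqv.injective (congrFun hab j)
  set C' : Finset (Fin n → ZMod q) := C.image ι with hC'
  have hdist : ∀ x y : Fin n → Fin q, hammingDist (ι x) (ι y) = hammingDist x y :=
    fun x y => hammingDist_comp (fun _ => eqv) (fun _ => eqv.injective)
  -- positivity of the Krawtchouk sums for the original code
  have Snonneg : ∀ i : ℕ,
      0 ≤ ∑ x ∈ C, ∑ y ∈ C, kraw n q i (hammingDist x y : ℝ) := by
    intro i
    have him : ∑ x ∈ C', ∑ y ∈ C', kraw n q i (hammingDist x y : ℝ)
        = ∑ x ∈ C, ∑ y ∈ C, kraw n q i (hammingDist x y : ℝ) := by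
      rw [hC', Finset.sum_image (fun a _ b _ h => hinj h)]
      refine Finset.sum_congr rfl fun x _ => ?_
      rw [Finset.sum_image (fun a _ b _ h => hinj h)]
      refine Finset.sum_congr rfl fun y _ => ?_
      rw [hdist]
    rw [← him]
    exact kraw_sum_nonneg e hprim n i C'
  -- the double sum
  set D : ℝ := ∑ x ∈ C, ∑ y ∈ C, ∑ i ∈ Finset.range (n + 1),
      G i * kraw n q i (hammingDist x y : ℝ) with hD
  have hswap : D = ∑ i ∈ Finset.range (n + 1),
      G i * ∑ x ∈ C, ∑ y ∈ C, kraw n q i (hammingDist x y : ℝ) := by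
    rw [hD]
    calc ∑ x ∈ C, ∑ y ∈ C, ∑ i ∈ Finset.range (n + 1),
          G i * kraw n q i (hammingDist x y : ℝ)
        = ∑ x ∈ C, ∑ i ∈ Finset.range (n + 1), ∑ y ∈ C,
            G i * kraw n q i (hammingDist x y : ℝ) :=
          Finset.sum_congr rfl fun x _ => Finset.sum_comm
      _ = ∑ i ∈ Finset.range (n + 1), ∑ x ∈ C, ∑ y ∈ C,
            G i * kraw n q i (hammingDist x y : ℝ) := Finset.sum_comm
      _ = ∑ i ∈ Finset.range (n + 1),
            G i * ∑ x ∈ C, ∑ y ∈ C, kraw n q i (hammingDist x y : ℝ) := by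
          refine Finset.sum_congr rfl fun i _ => ?_
          rw [Finset.mul_sum]
          exact Finset.sum_congr rfl fun x _ => (Finset.mul_sum _ _ _).symm
  have hS0 : ∑ x ∈ C, ∑ y ∈ C, kraw n q 0 (hammingDist x y : ℝ) = (N : ℝ) ^ 2 := by
    simp [kraw_zero, hN, sq]
  have hlow : G 0 * (N : ℝ) ^ 2 ≤ D := by
    rw [hswap, Finset.sum_range_succ']
    have : 0 ≤ ∑ i ∈ Finset.range n,
        G (i + 1) * ∑ x ∈ C, ∑ y ∈ C, kraw n q (i + 1) (hammingDist x y : ℝ) := by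
      refine Finset.sum_nonneg fun i hi => mul_nonneg
        (hGi (i + 1) (by omega) (by simpa using Finset.mem_range.mp hi)) (Snonneg (i + 1))
    rw [hS0]
    linarith
  have hup : D ≤ (N : ℝ) * g0 := by
    rw [hD]
    have hx : ∀ x ∈ C, ∑ y ∈ C, ∑ i ∈ Finset.range (n + 1),
        G i * kraw n q i (hammingDist x y : ℝ) ≤ g0 := by
      intro x hx
      rw [← Finset.sum_erase_add C _ hx]
      have h1 : ∑ y ∈ C.erase x, ∑ i ∈ Finset.range (n + 1),
          G i * kraw n q i (hammingDist x y : ℝ) ≤ 0 := by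
        refine Finset.sum_nonpos fun y hy => ?_
        obtain ⟨hyx, hyC⟩ := Finset.mem_erase.mp hy
        exact hgi (hammingDist x y) (hC x hx y hyC (Ne.symm hyx))
          (by simpa using hammingDist_le_card_fintype (x := x) (y := y))
      have h2 : ∑ i ∈ Finset.range (n + 1), G i * kraw n q i ((hammingDist x x : ℕ) : ℝ)
          = g0 := by
        rw [hg0def]
        refine Finset.sum_congr rfl fun i _ => ?_
        rw [hammingDist_self, Nat.cast_zero]
      linarith
    calc ∑ x ∈ C, ∑ y ∈ C, ∑ i ∈ Finset.range (n + 1),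
          G i * kraw n q i (hammingDist x y : ℝ)
        ≤ ∑ _x ∈ C, g0 := Finset.sum_le_sum hx
      _ = (N : ℝ) * g0 := by rw [Finset.sum_const, hN, nsmul_eq_mul]
  by_cases hNz : N = 0
  · rw [hNz]
    push_cast
    positivity
  · have hNpos : (0 : ℝ) < N := by positivity
    rw [le_div_iff₀ hG0]
    nlinarith [hlow.trans hup, hNpos]
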